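/- Let f be C² on [a,b]×[c,d] with error term E(f) defined by the two-dimensional trapezoidal rule ∫_a^b∫_c^d f dy dx = [f(a,c)+f(b,d)+f(a,d)+f(b,c)](b−a)(d−c)/4 + E(f). Then |E(f)| ≤ (‖f_x(·,c)‖_∞ + ‖f_x(·,d)‖_∞)·(b−a)²(d−c)/8 + (‖f_y(a,·)‖_∞ + ‖f_y(b,·)‖_∞)·(b−a)(d−c)²/8 + ‖f_{xy}‖_∞·(b−a)²(d−c)²/16. -/

import Mathlib

open MeasureTheory Set intervalIntegral

private lemma trap_id {a b : ℝ} (hab : a < b) {g g' : ℝ → ℝ}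
    (hg : ContinuousOn g (Icc a b)) (hg' : ContinuousOn g' (Icc a b))
    (hd : ∀ x ∈ Ioo a b, HasDerivAt g (g' x) x) :
    ∫ x in a..b, g x = (g a + g b) * ((b - a) / 2)
      + ∫ x in a..b, ((a + b) / 2 - x) * g' x := by
  have hH : ContinuousOn (fun x => ((a + b) / 2 - x) * g x) (Icc a b) :=
    (continuousOn_const.sub continuousOn_id).mul hg
  have hd' : ∀ x ∈ Ioo a b,
      HasDerivWithinAt (fun x => ((a + b) / 2 - x) * g x)
        (-g x + ((a + b) / 2 - x) * g' x) (Ioi x) x := by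
    intro x hx
    have h1 : HasDerivAt (fun x : ℝ => (a + b) / 2 - x) (-1) x := by
      simpa using (hasDerivAt_id x).const_sub ((a + b) / 2)
    have h2 := h1.mul (hd x hx)
    have : (-1 : ℝ) * g x + ((a + b) / 2 - x) * g' x = -g x + ((a + b) / 2 - x) * g' x := by
      ring
    rw [this] at h2
    exact h2.hasDerivWithinAt
  have hgi : IntervalIntegrable g volume a b := by
    apply ContinuousOn.intervalIntegrable; rwa [uIcc_of_le hab.le]
  have hki : IntervalIntegrable (fun x => ((a + b) / 2 - x) * g' x) volume a b := by
    apply ContinuousOn.intervalIntegrable; rw [uIcc_of_le hab.le]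
    exact (continuousOn_const.sub continuousOn_id).mul hg'
  have hint : IntervalIntegrable (fun x => -g x + ((a + b) / 2 - x) * g' x) volume a b :=
    hgi.neg.add hki
  have key := integral_eq_sub_of_hasDeriv_right_of_le hab.le hH hd' hint
  have ks : (∫ x in a..b, (-g x + ((a + b) / 2 - x) * g' x))
      = (∫ x in a..b, (-g x)) + ∫ x in a..b, ((a + b) / 2 - x) * g' x :=
    integral_add hgi.neg hki
  rw [ks, intervalIntegral.integral_neg] at key
  have e1 : ((a + b) / 2 - b) * g b - ((a + b) / 2 - a) * g a
      = -((g a + g b) * ((b - a) / 2)) := by ring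
  rw [e1] at key
  linarith

private lemma abs_kern_int {a b : ℝ} (hab : a < b) (M : ℝ) :
    ∫ x in a..b, |(a + b) / 2 - x| * M = M * ((b - a) ^ 2 / 4) := by
  have hm1 : a ≤ (a + b) / 2 := by linarith
  have hm2 : (a + b) / 2 ≤ b := by linarith
  have hi1 : IntervalIntegrable (fun x => |(a + b) / 2 - x| * M) volume a ((a + b) / 2) :=
    (((continuous_const.sub continuous_id).abs).mul continuous_const).intervalIntegrable _ _
  have hi2 : IntervalIntegrable (fun x => |(a + b) / 2 - x| * M) volume ((a + b) / 2) b :=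
    (((continuous_const.sub continuous_id).abs).mul continuous_const).intervalIntegrable _ _
  rw [← integral_add_adjacent_intervals hi1 hi2]
  have e1 : ∫ x in a..((a + b) / 2), |(a + b) / 2 - x| * M
      = ∫ x in a..((a + b) / 2), ((a + b) / 2 - x) * M := by
    apply integral_congr
    intro x hx
    rw [uIcc_of_le hm1] at hx
    show |(a + b) / 2 - x| * M = ((a + b) / 2 - x) * M
    rw [abs_of_nonneg (by linarith [hx.2])]
  have e2 : ∫ x in ((a + b) / 2)..b, |(a + b) / 2 - x| * M
      = ∫ x in ((a + b) / 2)..b, (x - (a + b) / 2) * M := by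
    apply integral_congr
    intro x hx
    rw [uIcc_of_le hm2] at hx
    show |(a + b) / 2 - x| * M = (x - (a + b) / 2) * M
    rw [abs_of_nonpos (by linarith [hx.1]), neg_sub]
  have c1 : ∫ x in a..((a + b) / 2), ((a + b) / 2 - x) * M
      = ((a + b) / 2 * ((a + b) / 2 - a) - (((a + b) / 2) ^ 2 - a ^ 2) / 2) * M := by
    rw [intervalIntegral.integral_mul_const]
    have : ∫ x in a..((a + b) / 2), ((a + b) / 2 - x)
        = (∫ x in a..((a + b) / 2), ((a + b) / 2 : ℝ)) - ∫ x in a..((a + b) / 2), x :=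
      intervalIntegral.integral_sub intervalIntegrable_const intervalIntegrable_id
    rw [this, integral_id, intervalIntegral.integral_const, smul_eq_mul]
    try ring
  have c2 : ∫ x in ((a + b) / 2)..b, (x - (a + b) / 2) * M
      = ((b ^ 2 - ((a + b) / 2) ^ 2) / 2 - (b - (a + b) / 2) * ((a + b) / 2)) * M := by
    rw [intervalIntegral.integral_mul_const]
    have : ∫ x in ((a + b) / 2)..b, (x - (a + b) / 2)
        = (∫ x in ((a + b) / 2)..b, x) - ∫ x in ((a + b) / 2)..b, ((a + b) / 2 : ℝ) :=
      intervalIntegral.integral_sub intervalIntegrable_id intervalIntegrable_const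
    rw [this, integral_id, intervalIntegral.integral_const, smul_eq_mul]
    try ring
  rw [e1, e2, c1, c2]
  ring

private lemma kern_bound {a b : ℝ} (hab : a < b) {h : ℝ → ℝ} {M : ℝ}
    (hc : ContinuousOn h (Icc a b)) (hM : ∀ x ∈ Icc a b, |h x| ≤ M) :
    |∫ x in a..b, ((a + b) / 2 - x) * h x| ≤ M * ((b - a) ^ 2 / 4) := by
  have h0 : 0 ≤ M := (abs_nonneg _).trans (hM a ⟨le_refl a, hab.le⟩)
  have hae : ∀ᵐ t ∂(volume.restrict (uIoc a b)),
      ‖((a + b) / 2 - t) * h t‖ ≤ |(a + b) / 2 - t| * M := by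
    rw [ae_restrict_iff' measurableSet_uIoc]
    apply ae_of_all
    intro t ht
    rw [uIoc_of_le hab.le] at ht
    have ht' : t ∈ Icc a b := Ioc_subset_Icc_self ht
    rw [Real.norm_eq_abs, abs_mul]
    exact mul_le_mul_of_nonneg_left (hM t ht') (abs_nonneg _)
  have hbd : IntervalIntegrable (fun x => |(a + b) / 2 - x| * M) volume a b :=
    (((continuous_const.sub continuous_id).abs).mul continuous_const).intervalIntegrable _ _
  have key := intervalIntegral.norm_integral_le_abs_of_norm_le hae hbd
  rw [abs_kern_int hab M, Real.norm_eq_abs,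
    abs_of_nonneg (mul_nonneg h0 (by positivity))] at key
  exact key

private lemma swap_int {a b c d : ℝ} (hab : a ≤ b) (hcd : c ≤ d) {g : ℝ → ℝ → ℝ}
    (hg : Continuous fun p : ℝ × ℝ => g p.1 p.2) :
    ∫ x in a..b, ∫ y in c..d, g x y = ∫ y in c..d, ∫ x in a..b, g x y := by
  simp_rw [intervalIntegral.integral_of_le hab, intervalIntegral.integral_of_le hcd]
  apply MeasureTheory.integral_integral_swap
  have h1 : IntegrableOn (Function.uncurry g) (Icc a b ×ˢ Icc c d) volume :=
    hg.continuousOn.integrableOn_compact (isCompact_Icc.prod isCompact_Icc)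
  have h2 : IntegrableOn (Function.uncurry g) (Ioc a b ×ˢ Ioc c d) volume :=
    h1.mono_set (prod_mono Ioc_subset_Icc_self Ioc_subset_Icc_self)
  rw [Measure.prod_restrict]
  rw [IntegrableOn, Measure.volume_eq_prod] at h2
  exact h2

theorem stmt_2 (a b c d : ℝ) (hab : a < b) (hcd : c < d)
    (f fx fy fxy : ℝ → ℝ → ℝ)
(hfC : ContinuousOn (fun p : ℝ × ℝ => f p.1 p.2) (Icc a b ×ˢ Icc c d))
    (hfx : ∀ x ∈ Icc a b, ∀ y ∈ Icc c d, HasDerivAt (fun x' => f x' y) (fx x y) x)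
    (hfy : ∀ x ∈ Icc a b, ∀ y ∈ Icc c d, HasDerivAt (fun y' => f x y') (fy x y) y)
    (hfxy : ∀ x ∈ Icc a b, ∀ y ∈ Icc c d, HasDerivAt (fun y' => fx x y') (fxy x y) y)
    (hfxC : ContinuousOn (fun p : ℝ × ℝ => fx p.1 p.2) (Icc a b ×ˢ Icc c d))
    (hfyC : ContinuousOn (fun p : ℝ × ℝ => fy p.1 p.2) (Icc a b ×ˢ Icc c d))
    (hfxyC : ContinuousOn (fun p : ℝ × ℝ => fxy p.1 p.2) (Icc a b ×ˢ Icc c d))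
    (E : ℝ)
    (hE : (∫ x in a..b, ∫ y in c..d, f x y) = (f a c + f b d + f a d + f b c) * ((b - a) * (d - c) / 4) + E) :
    |E| ≤ (sSup ((fun x => |fx x c|) '' Icc a b) + sSup ((fun x => |fx x d|) '' Icc a b))
            * ((b - a) ^ 2 * (d - c) / 8)
        + (sSup ((fun y => |fy a y|) '' Icc c d) + sSup ((fun y => |fy b y|) '' Icc c d))
            * ((b - a) * (d - c) ^ 2 / 8)
        + sSup ((fun p : ℝ × ℝ => |fxy p.1 p.2|) '' (Icc a b ×ˢ Icc c d))
            * ((b - a) ^ 2 * (d - c) ^ 2 / 16) := by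
  have hax : a ∈ Icc a b := ⟨le_refl a, hab.le⟩
  have hbx : b ∈ Icc a b := ⟨hab.le, le_refl b⟩
  have hcy : c ∈ Icc c d := ⟨le_refl c, hcd.le⟩
  have hdy : d ∈ Icc c d := ⟨hcd.le, le_refl d⟩
  set π : ℝ → ℝ := fun x => max a (min x b) with hπdef
  set σ : ℝ → ℝ := fun y => max c (min y d) with hσdef
  have hπ : ∀ x ∈ Icc a b, π x = x := by
    intro x hx; rw [hπdef]; simp only
    rw [min_eq_left hx.2, max_eq_right hx.1]
  have hσ : ∀ y ∈ Icc c d, σ y = y := by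
    intro y hy; rw [hσdef]; simp only
    rw [min_eq_left hy.2, max_eq_right hy.1]
  have hπm : ∀ x, π x ∈ Icc a b := fun x =>
    ⟨le_max_left _ _, max_le hab.le (min_le_right _ _)⟩
  have hσm : ∀ y, σ y ∈ Icc c d := fun y =>
    ⟨le_max_left _ _, max_le hcd.le (min_le_right _ _)⟩
  have hπc : Continuous π := continuous_const.max (continuous_id.min continuous_const)
  have hσc : Continuous σ := continuous_const.max (continuous_id.min continuous_const)
  have hPc : Continuous fun p : ℝ × ℝ => (π p.1, σ p.2) :=
    (hπc.comp continuous_fst).prodMk (hσc.comp continuous_snd)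
  have hPm : ∀ p : ℝ × ℝ, (π p.1, σ p.2) ∈ Icc a b ×ˢ Icc c d := fun p => ⟨hπm _, hσm _⟩
  set F : ℝ → ℝ → ℝ := fun x y => f (π x) (σ y) with hF
  set Fx : ℝ → ℝ → ℝ := fun x y => fx (π x) (σ y) with hFx
  set Fy : ℝ → ℝ → ℝ := fun x y => fy (π x) (σ y) with hFy
  set Fxy : ℝ → ℝ → ℝ := fun x y => fxy (π x) (σ y) with hFxy
  have hFc : Continuous fun p : ℝ × ℝ => F p.1 p.2 := hfC.comp_continuous hPc hPm
  have hFxc : Continuous fun p : ℝ × ℝ => Fx p.1 p.2 := hfxC.comp_continuous hPc hPm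
  have hFyc : Continuous fun p : ℝ × ℝ => Fy p.1 p.2 := hfyC.comp_continuous hPc hPm
  have hFxyc : Continuous fun p : ℝ × ℝ => Fxy p.1 p.2 := hfxyC.comp_continuous hPc hPm
  have sliceX : ∀ (G : ℝ → ℝ → ℝ), (Continuous fun p : ℝ × ℝ => G p.1 p.2) →
      ∀ y : ℝ, Continuous fun x => G x y := fun G hG y =>
    hG.comp (continuous_id.prodMk continuous_const)
  have sliceY : ∀ (G : ℝ → ℝ → ℝ), (Continuous fun p : ℝ × ℝ => G p.1 p.2) →
      ∀ x : ℝ, Continuous fun y => G x y := fun G hG x =>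
    hG.comp (continuous_const.prodMk continuous_id)
  -- derivatives of the clamped functions
  have hFdx : ∀ y : ℝ, ∀ x ∈ Ioo a b, HasDerivAt (fun x' => F x' y) (Fx x y) x := by
    intro y x hx
    have h0 := hfx x (Ioo_subset_Icc_self hx) (σ y) (hσm y)
    have heq : (fun x' => F x' y) =ᶠ[nhds x] fun x' => f x' (σ y) := by
      filter_upwards [isOpen_Ioo.mem_nhds hx] with t ht
      show f (π t) (σ y) = f t (σ y)
      rw [hπ t (Ioo_subset_Icc_self ht)]
    have hv : Fx x y = fx x (σ y) := by
      show fx (π x) (σ y) = fx x (σ y); rw [hπ x (Ioo_subset_Icc_self hx)]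
    rw [hv]
    exact h0.congr_of_eventuallyEq heq
  have hFdy : ∀ x : ℝ, ∀ y ∈ Ioo c d, HasDerivAt (fun y' => F x y') (Fy x y) y := by
    intro x y hy
    have h0 := hfy (π x) (hπm x) y (Ioo_subset_Icc_self hy)
    have heq : (fun y' => F x y') =ᶠ[nhds y] fun y' => f (π x) y' := by
      filter_upwards [isOpen_Ioo.mem_nhds hy] with t ht
      show f (π x) (σ t) = f (π x) t
      rw [hσ t (Ioo_subset_Icc_self ht)]
    have hv : Fy x y = fy (π x) y := by
      show fy (π x) (σ y) = fy (π x) y; rw [hσ y (Ioo_subset_Icc_self hy)]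
    rw [hv]
    exact h0.congr_of_eventuallyEq heq
  have hFxdy : ∀ x : ℝ, ∀ y ∈ Ioo c d, HasDerivAt (fun y' => Fx x y') (Fxy x y) y := by
    intro x y hy
    have h0 := hfxy (π x) (hπm x) y (Ioo_subset_Icc_self hy)
    have heq : (fun y' => Fx x y') =ᶠ[nhds y] fun y' => fx (π x) y' := by
      filter_upwards [isOpen_Ioo.mem_nhds hy] with t ht
      show fx (π x) (σ t) = fx (π x) t
      rw [hσ t (Ioo_subset_Icc_self ht)]
    have hv : Fxy x y = fxy (π x) y := by
      show fxy (π x) (σ y) = fxy (π x) y; rw [hσ y (Ioo_subset_Icc_self hy)]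
    rw [hv]
    exact h0.congr_of_eventuallyEq heq
  -- the three trapezoid identities
  have idA : ∀ y : ℝ, (∫ x in a..b, F x y)
      = (F a y + F b y) * ((b - a) / 2) + ∫ x in a..b, ((a + b) / 2 - x) * Fx x y :=
    fun y => trap_id hab (sliceX F hFc y).continuousOn (sliceX Fx hFxc y).continuousOn (hFdx y)
  have idB : ∀ x : ℝ, (∫ y in c..d, F x y)
      = (F x c + F x d) * ((d - c) / 2) + ∫ y in c..d, ((c + d) / 2 - y) * Fy x y :=
    fun x => trap_id hcd (sliceY F hFc x).continuousOn (sliceY Fy hFyc x).continuousOn (hFdy x)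
  have idC : ∀ x : ℝ, (∫ y in c..d, Fx x y)
      = (Fx x c + Fx x d) * ((d - c) / 2) + ∫ y in c..d, ((c + d) / 2 - y) * Fxy x y :=
    fun x => trap_id hcd (sliceY Fx hFxc x).continuousOn (sliceY Fxy hFxyc x).continuousOn (hFxdy x)
  -- continuity of the parametric integrals
  have hKc : Continuous fun y => ∫ x in a..b, ((a + b) / 2 - x) * Fx x y := by
    apply intervalIntegral.continuous_parametric_intervalIntegral_of_continuous'
    exact (continuous_const.sub continuous_snd).mul
      (hFxc.comp (continuous_snd.prodMk continuous_fst))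
  have hTc : Continuous fun x => ∫ y in c..d, ((c + d) / 2 - y) * Fxy x y := by
    apply intervalIntegral.continuous_parametric_intervalIntegral_of_continuous'
    exact (continuous_const.sub continuous_snd).mul
      (hFxyc.comp (continuous_fst.prodMk continuous_snd))
  -- step 0: replace f by F
  have step0 : (∫ x in a..b, ∫ y in c..d, f x y) = ∫ x in a..b, ∫ y in c..d, F x y := by
    apply intervalIntegral.integral_congr
    intro x hx
    rw [uIcc_of_le hab.le] at hx
    show (∫ y in c..d, f x y) = ∫ y in c..d, F x y
    apply intervalIntegral.integral_congr
    intro y hy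
    rw [uIcc_of_le hcd.le] at hy
    show f x y = F x y
    simp only [hF]
    rw [hπ x hx, hσ y hy]
  have step1 : (∫ x in a..b, ∫ y in c..d, F x y) = ∫ y in c..d, ∫ x in a..b, F x y :=
    swap_int hab.le hcd.le hFc
  have step2 : (∫ y in c..d, ∫ x in a..b, F x y)
      = ∫ y in c..d, ((F a y + F b y) * ((b - a) / 2)
          + ∫ x in a..b, ((a + b) / 2 - x) * Fx x y) := by
    apply intervalIntegral.integral_congr
    intro y _
    exact idA y
  have i1 : IntervalIntegrable (fun y => (b - a) / 2 * F a y) volume c d :=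
    (continuous_const.mul (sliceY F hFc a)).intervalIntegrable _ _
  have i2 : IntervalIntegrable (fun y => (b - a) / 2 * F b y) volume c d :=
    (continuous_const.mul (sliceY F hFc b)).intervalIntegrable _ _
  have i3 : IntervalIntegrable
      (fun y => ∫ x in a..b, ((a + b) / 2 - x) * Fx x y) volume c d :=
    hKc.intervalIntegrable _ _
  have step3 : (∫ y in c..d, ((F a y + F b y) * ((b - a) / 2)
          + ∫ x in a..b, ((a + b) / 2 - x) * Fx x y))
      = (b - a) / 2 * (∫ y in c..d, F a y) + (b - a) / 2 * (∫ y in c..d, F b y)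
        + ∫ y in c..d, ∫ x in a..b, ((a + b) / 2 - x) * Fx x y := by
    have e : (∫ y in c..d, ((F a y + F b y) * ((b - a) / 2)
            + ∫ x in a..b, ((a + b) / 2 - x) * Fx x y))
        = ∫ y in c..d, (((b - a) / 2 * F a y + (b - a) / 2 * F b y)
            + ∫ x in a..b, ((a + b) / 2 - x) * Fx x y) := by
      apply intervalIntegral.integral_congr
      intro y _
      ring
    rw [e, intervalIntegral.integral_add (i1.add i2) i3, intervalIntegral.integral_add i1 i2,
      intervalIntegral.integral_const_mul, intervalIntegral.integral_const_mul]
  have step4 : (∫ y in c..d, ∫ x in a..b, ((a + b) / 2 - x) * Fx x y)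
      = ∫ x in a..b, ((a + b) / 2 - x) * ∫ y in c..d, Fx x y := by
    have hg : Continuous fun p : ℝ × ℝ => ((a + b) / 2 - p.1) * Fx p.1 p.2 :=
      (continuous_const.sub continuous_fst).mul hFxc
    rw [← swap_int hab.le hcd.le hg]
    apply intervalIntegral.integral_congr
    intro x _
    exact intervalIntegral.integral_const_mul _ _
  have j1 : IntervalIntegrable
      (fun x => (d - c) / 2 * (((a + b) / 2 - x) * Fx x c)) volume a b :=
    (continuous_const.mul ((continuous_const.sub continuous_id).mul
      (sliceX Fx hFxc c))).intervalIntegrable _ _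
  have j2 : IntervalIntegrable
      (fun x => (d - c) / 2 * (((a + b) / 2 - x) * Fx x d)) volume a b :=
    (continuous_const.mul ((continuous_const.sub continuous_id).mul
      (sliceX Fx hFxc d))).intervalIntegrable _ _
  have j3 : IntervalIntegrable
      (fun x => ((a + b) / 2 - x) * ∫ y in c..d, ((c + d) / 2 - y) * Fxy x y) volume a b :=
    ((continuous_const.sub continuous_id).mul hTc).intervalIntegrable _ _
  have step5 : (∫ x in a..b, ((a + b) / 2 - x) * ∫ y in c..d, Fx x y)
      = (d - c) / 2 * (∫ x in a..b, ((a + b) / 2 - x) * Fx x c)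
        + (d - c) / 2 * (∫ x in a..b, ((a + b) / 2 - x) * Fx x d)
        + ∫ x in a..b, ((a + b) / 2 - x) * ∫ y in c..d, ((c + d) / 2 - y) * Fxy x y := by
    have e : (∫ x in a..b, ((a + b) / 2 - x) * ∫ y in c..d, Fx x y)
        = ∫ x in a..b, (((d - c) / 2 * (((a + b) / 2 - x) * Fx x c)
              + (d - c) / 2 * (((a + b) / 2 - x) * Fx x d))
            + ((a + b) / 2 - x) * ∫ y in c..d, ((c + d) / 2 - y) * Fxy x y) := by
      apply intervalIntegral.integral_congr
      intro x _
      show ((a + b) / 2 - x) * (∫ y in c..d, Fx x y) = _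
      rw [idC x]
      ring
    rw [e, intervalIntegral.integral_add (j1.add j2) j3, intervalIntegral.integral_add j1 j2,
      intervalIntegral.integral_const_mul, intervalIntegral.integral_const_mul]
  -- assemble
  have hS : (∫ x in a..b, ∫ y in c..d, f x y)
      = (b - a) / 2 * ((F a c + F a d) * ((d - c) / 2)
            + ∫ y in c..d, ((c + d) / 2 - y) * Fy a y)
        + (b - a) / 2 * ((F b c + F b d) * ((d - c) / 2)
            + ∫ y in c..d, ((c + d) / 2 - y) * Fy b y)
        + ((d - c) / 2 * (∫ x in a..b, ((a + b) / 2 - x) * Fx x c)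
          + (d - c) / 2 * (∫ x in a..b, ((a + b) / 2 - x) * Fx x d)
          + ∫ x in a..b, ((a + b) / 2 - x) * ∫ y in c..d, ((c + d) / 2 - y) * Fxy x y) := by
    rw [step0, step1, step2, step3, step4, step5, idB a, idB b]
  have hFac : F a c = f a c := by simp only [hF]; rw [hπ a hax, hσ c hcy]
  have hFad : F a d = f a d := by simp only [hF]; rw [hπ a hax, hσ d hdy]
  have hFbc : F b c = f b c := by simp only [hF]; rw [hπ b hbx, hσ c hcy]
  have hFbd : F b d = f b d := by simp only [hF]; rw [hπ b hbx, hσ d hdy]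
  rw [hFac, hFad, hFbc, hFbd] at hS
  have hEeq : E = (b - a) / 2 * (∫ y in c..d, ((c + d) / 2 - y) * Fy a y)
        + (b - a) / 2 * (∫ y in c..d, ((c + d) / 2 - y) * Fy b y)
        + ((d - c) / 2 * (∫ x in a..b, ((a + b) / 2 - x) * Fx x c)
          + (d - c) / 2 * (∫ x in a..b, ((a + b) / 2 - x) * Fx x d)
          + ∫ x in a..b, ((a + b) / 2 - x) * ∫ y in c..d, ((c + d) / 2 - y) * Fxy x y) := by
    linear_combination hS - hE
  -- supremum bounds
  have hRaB : |∫ y in c..d, ((c + d) / 2 - y) * Fy a y|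
      ≤ sSup ((fun y => |fy a y|) '' Icc c d) * ((d - c) ^ 2 / 4) := by
    apply kern_bound hcd (sliceY Fy hFyc a).continuousOn
    intro y hy
    have hv : Fy a y = fy a y := by simp only [hFy]; rw [hπ a hax, hσ y hy]
    rw [hv]
    have hcont : ContinuousOn (fun y => |fy a y|) (Icc c d) :=
      (hfyC.comp ((continuous_const.prodMk continuous_id).continuousOn)
        (fun y hy => ⟨hax, hy⟩)).abs
    exact le_csSup ((isCompact_Icc.image_of_continuousOn hcont).bddAbove) ⟨y, hy, rfl⟩
  have hRbB : |∫ y in c..d, ((c + d) / 2 - y) * Fy b y|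
      ≤ sSup ((fun y => |fy b y|) '' Icc c d) * ((d - c) ^ 2 / 4) := by
    apply kern_bound hcd (sliceY Fy hFyc b).continuousOn
    intro y hy
    have hv : Fy b y = fy b y := by simp only [hFy]; rw [hπ b hbx, hσ y hy]
    rw [hv]
    have hcont : ContinuousOn (fun y => |fy b y|) (Icc c d) :=
      (hfyC.comp ((continuous_const.prodMk continuous_id).continuousOn)
        (fun y hy => ⟨hbx, hy⟩)).abs
    exact le_csSup ((isCompact_Icc.image_of_continuousOn hcont).bddAbove) ⟨y, hy, rfl⟩
  have hICB : |∫ x in a..b, ((a + b) / 2 - x) * Fx x c|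
      ≤ sSup ((fun x => |fx x c|) '' Icc a b) * ((b - a) ^ 2 / 4) := by
    apply kern_bound hab (sliceX Fx hFxc c).continuousOn
    intro x hx
    have hv : Fx x c = fx x c := by simp only [hFx]; rw [hπ x hx, hσ c hcy]
    rw [hv]
    have hcont : ContinuousOn (fun x => |fx x c|) (Icc a b) :=
      (hfxC.comp ((continuous_id.prodMk continuous_const).continuousOn)
        (fun x hx => ⟨hx, hcy⟩)).abs
    exact le_csSup ((isCompact_Icc.image_of_continuousOn hcont).bddAbove) ⟨x, hx, rfl⟩
  have hIDB : |∫ x in a..b, ((a + b) / 2 - x) * Fx x d|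
      ≤ sSup ((fun x => |fx x d|) '' Icc a b) * ((b - a) ^ 2 / 4) := by
    apply kern_bound hab (sliceX Fx hFxc d).continuousOn
    intro x hx
    have hv : Fx x d = fx x d := by simp only [hFx]; rw [hπ x hx, hσ d hdy]
    rw [hv]
    have hcont : ContinuousOn (fun x => |fx x d|) (Icc a b) :=
      (hfxC.comp ((continuous_id.prodMk continuous_const).continuousOn)
        (fun x hx => ⟨hx, hdy⟩)).abs
    exact le_csSup ((isCompact_Icc.image_of_continuousOn hcont).bddAbove) ⟨x, hx, rfl⟩
  have hTB : ∀ x ∈ Icc a b, |∫ y in c..d, ((c + d) / 2 - y) * Fxy x y|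
      ≤ sSup ((fun p : ℝ × ℝ => |fxy p.1 p.2|) '' (Icc a b ×ˢ Icc c d)) * ((d - c) ^ 2 / 4) := by
    intro x _
    apply kern_bound hcd (sliceY Fxy hFxyc x).continuousOn
    intro y hy
    have hv : Fxy x y = fxy (π x) y := by simp only [hFxy]; rw [hσ y hy]
    rw [hv]
    have hcontp : ContinuousOn (fun p : ℝ × ℝ => |fxy p.1 p.2|) (Icc a b ×ˢ Icc c d) :=
      hfxyC.abs
    exact le_csSup
      (((isCompact_Icc.prod isCompact_Icc).image_of_continuousOn hcontp).bddAbove)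
      ⟨(π x, y), ⟨hπm x, hy⟩, rfl⟩
  have hJB : |∫ x in a..b, ((a + b) / 2 - x) * ∫ y in c..d, ((c + d) / 2 - y) * Fxy x y|
      ≤ sSup ((fun p : ℝ × ℝ => |fxy p.1 p.2|) '' (Icc a b ×ˢ Icc c d)) * ((d - c) ^ 2 / 4)
        * ((b - a) ^ 2 / 4) :=
    kern_bound hab hTc.continuousOn hTB
  have hba2 : (0:ℝ) ≤ (b - a) / 2 := by linarith
  have hdc2 : (0:ℝ) ≤ (d - c) / 2 := by linarith
  set RA := ∫ y in c..d, ((c + d) / 2 - y) * Fy a y with hRAdef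
  set RB := ∫ y in c..d, ((c + d) / 2 - y) * Fy b y with hRBdef
  set IC2 := ∫ x in a..b, ((a + b) / 2 - x) * Fx x c with hIC2def
  set ID2 := ∫ x in a..b, ((a + b) / 2 - x) * Fx x d with hID2def
  set J2 := ∫ x in a..b, ((a + b) / 2 - x) * ∫ y in c..d, ((c + d) / 2 - y) * Fxy x y with hJ2def
  set MA := sSup ((fun y => |fy a y|) '' Icc c d) with hMAdef
  set MB := sSup ((fun y => |fy b y|) '' Icc c d) with hMBdef
  set MC := sSup ((fun x => |fx x c|) '' Icc a b) with hMCdef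
  set MD := sSup ((fun x => |fx x d|) '' Icc a b) with hMDdef
  set MXY := sSup ((fun p : ℝ × ℝ => |fxy p.1 p.2|) '' (Icc a b ×ˢ Icc c d)) with hMXYdef
  rw [hEeq]
  have m1 : |(b - a) / 2 * RA| = (b - a) / 2 * |RA| := by rw [abs_mul, abs_of_nonneg hba2]
  have m2 : |(b - a) / 2 * RB| = (b - a) / 2 * |RB| := by rw [abs_mul, abs_of_nonneg hba2]
  have m3 : |(d - c) / 2 * IC2| = (d - c) / 2 * |IC2| := by rw [abs_mul, abs_of_nonneg hdc2]
  have m4 : |(d - c) / 2 * ID2| = (d - c) / 2 * |ID2| := by rw [abs_mul, abs_of_nonneg hdc2]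
  calc |(b - a) / 2 * RA + (b - a) / 2 * RB + ((d - c) / 2 * IC2 + (d - c) / 2 * ID2 + J2)|
      ≤ |(b - a) / 2 * RA + (b - a) / 2 * RB|
        + |(d - c) / 2 * IC2 + (d - c) / 2 * ID2 + J2| := abs_add_le _ _
    _ ≤ (|(b - a) / 2 * RA| + |(b - a) / 2 * RB|)
        + ((|(d - c) / 2 * IC2| + |(d - c) / 2 * ID2|) + |J2|) :=
        add_le_add (abs_add_le _ _) ((abs_add_le _ _).trans (add_le_add (abs_add_le _ _) le_rfl))
    _ = (b - a) / 2 * |RA| + (b - a) / 2 * |RB|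
        + ((d - c) / 2 * |IC2| + (d - c) / 2 * |ID2| + |J2|) := by
        rw [m1, m2, m3, m4]
        try ring
    _ ≤ (b - a) / 2 * (MA * ((d - c) ^ 2 / 4)) + (b - a) / 2 * (MB * ((d - c) ^ 2 / 4))
        + ((d - c) / 2 * (MC * ((b - a) ^ 2 / 4)) + (d - c) / 2 * (MD * ((b - a) ^ 2 / 4))
          + MXY * ((d - c) ^ 2 / 4) * ((b - a) ^ 2 / 4)) := by
        gcongr <;>
          first
            | exact hba2 | exact hdc2 | exact hRaB | exact hRbB
            | exact hICB | exact hIDB | exact hJB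
    _ = (MC + MD) * ((b - a) ^ 2 * (d - c) / 8) + (MA + MB) * ((b - a) * (d - c) ^ 2 / 8)
        + MXY * ((b - a) ^ 2 * (d - c) ^ 2 / 16) := by ring
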